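/- Let S be a compact Polish metric space, f : S → ℝ lower semicontinuous, c : S × S → [0,∞) lower semicontinuous, and λ ≥ 0. For every x ∈ S the argmin set m(x) = argmin_{y ∈ S} { f(y) + λ c(x,y) } is nonempty and compact, and the set D = { (x, y) ∈ S × S : y ∈ m(x) } is a Borel subset of S × S. -/

import Mathlib

open Filter Topology Set

/-- A lower semicontinuous real function on a nonempty compact space attains its minimum. -/
lemma lsc_exists_min {S : Type*} [TopologicalSpace S] [CompactSpace S] [Nonempty S]
    {g : S → ℝ} (hg : LowerSemicontinuous g) : ∃ y : S, ∀ z : S, g y ≤ g z := by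
  have h := isCompact_univ.inter_iInter_nonempty (fun z : S => {y : S | g y ≤ g z})
    (fun z => hg.isClosed_preimage (g z)) ?_
  · obtain ⟨y, -, hy⟩ := h
    simp only [Set.mem_iInter, Set.mem_setOf_eq] at hy
    exact ⟨y, hy⟩
  · intro u
    rcases u.eq_empty_or_nonempty with rfl | hu
    · simpa using (Set.univ_nonempty : (Set.univ : Set S).Nonempty)
    · obtain ⟨y₀, hy₀u, hy₀⟩ := u.exists_min_image g hu
      exact ⟨y₀, by simpa using fun z hz => hy₀ z hz⟩

/-- The infimum over a compact space of a lower semicontinuous function of two variables is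
lower semicontinuous. -/
lemma lsc_iInf {X S : Type*} [TopologicalSpace X] [TopologicalSpace S] [CompactSpace S]
    [Nonempty S] {g : X × S → ℝ} (hg : LowerSemicontinuous g) :
    LowerSemicontinuous fun x : X => ⨅ y : S, g (x, y) := by
  intro x t ht
  obtain ⟨t', ht', ht''⟩ := exists_between ht
  have hbdd : ∀ x : X, BddBelow (Set.range fun y : S => g (x, y)) := by
    intro x
    obtain ⟨y₀, hy₀⟩ := lsc_exists_min (hg.comp (Continuous.prodMk_right x))
    exact ⟨g (x, y₀), by rintro a ⟨y, rfl⟩; exact hy₀ y⟩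
  have hall : ∀ y : S, t' < g (x, y) := by
    intro y
    exact lt_of_lt_of_le ht'' (ciInf_le (hbdd x) y)
  have hev : ∀ᶠ x' in 𝓝 x, ∀ y ∈ (Set.univ : Set S), t' < g (x', y) := by
    refine isCompact_univ.eventually_forall_of_forall_eventually (fun y _ => ?_)
    exact hg (x, y) t' (hall y)
  filter_upwards [hev] with x' hx'
  refine lt_of_lt_of_le ht' (le_ciInf fun y => (hx' y (Set.mem_univ y)).le)

/-- For `S` a compact Polish metric space, `f` lower semicontinuous,
`c ≥ 0` lower semicontinuous and `λ ≥ 0`: for every `x` the argmin set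
`m(x) = argmin_{y ∈ S} (f y + λ c (x, y))` is nonempty and compact, and
`D = {(x, y) : y ∈ m(x)}` is a Borel subset of `S × S`. -/
theorem argmin_nonempty_compact_and_graph_borel {S : Type*} [MetricSpace S] [PolishSpace S]
    [CompactSpace S] [MeasurableSpace S] [BorelSpace S]
    (f : S → ℝ) (hf : LowerSemicontinuous f)
    (c : S × S → ℝ) (hc0 : ∀ p, 0 ≤ c p) (hc : LowerSemicontinuous c)
    (l : ℝ) (hl : 0 ≤ l) :
    (∀ x : S,
      ({y : S | ∀ z : S, f y + l * c (x, y) ≤ f z + l * c (x, z)}).Nonempty ∧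
      IsCompact {y : S | ∀ z : S, f y + l * c (x, y) ≤ f z + l * c (x, z)}) ∧
    MeasurableSet
      {p : S × S | ∀ z : S, f p.2 + l * c (p.1, p.2) ≤ f z + l * c (p.1, z)} := by
  -- the total cost function
  set g : S × S → ℝ := fun p => f p.2 + l * c p with hg_def
  have hlc : LowerSemicontinuous fun p : S × S => l * c p := by
    rcases hl.eq_or_lt with rfl | hl'
    · have : (fun p : S × S => (0 : ℝ) * c p) = fun _ => (0 : ℝ) := by
        funext p; ring
      rw [this]; exact lowerSemicontinuous_const
    · intro p t ht
      have ht2 : t < l * c p := ht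
      have : t / l < c p := (div_lt_iff₀' hl').2 ht2
      filter_upwards [hc p (t / l) this] with q hq
      calc t = l * (t / l) := by field_simp
        _ < l * c q := by exact (mul_lt_mul_iff_right₀ hl').2 hq
  have hg : LowerSemicontinuous g :=
    LowerSemicontinuous.add (hf.comp continuous_snd) hlc
  rcases isEmpty_or_nonempty S with hS | hS
  · constructor
    · intro x; exact (hS.false x).elim
    · have : ({p : S × S | ∀ z : S, f p.2 + l * c (p.1, p.2) ≤ f z + l * c (p.1, z)}) = ∅ :=
        Set.eq_empty_of_isEmpty _
      rw [this]; exact MeasurableSet.empty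
  constructor
  · intro x
    have hgx : LowerSemicontinuous fun y : S => g (x, y) :=
      hg.comp (Continuous.prodMk_right x)
    constructor
    · obtain ⟨y, hy⟩ := lsc_exists_min hgx
      exact ⟨y, hy⟩
    · refine IsClosed.isCompact ?_
      have : {y : S | ∀ z : S, f y + l * c (x, y) ≤ f z + l * c (x, z)} =
          ⋂ z : S, {y : S | g (x, y) ≤ g (x, z)} := by
        ext y; simp [hg_def]
      rw [this]
      exact isClosed_iInter fun z => hgx.isClosed_preimage (g (x, z))
  · -- the graph is the sublevel set of the measurable function `g p - M p.1`
    set M : S → ℝ := fun x => ⨅ y : S, g (x, y) with hM_def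
    have hM : LowerSemicontinuous M := lsc_iInf hg
    have hbdd : ∀ x : S, BddBelow (Set.range fun y : S => g (x, y)) := by
      intro x
      obtain ⟨y₀, hy₀⟩ := lsc_exists_min (hg.comp (Continuous.prodMk_right x))
      exact ⟨g (x, y₀), by rintro a ⟨y, rfl⟩; exact hy₀ y⟩
    have hset : {p : S × S | ∀ z : S, f p.2 + l * c (p.1, p.2) ≤ f z + l * c (p.1, z)} =
        {p : S × S | g p ≤ M p.1} := by
      ext p
      constructor
      · intro h
        exact le_ciInf fun z => h z
      · intro h z
        exact le_trans h (ciInf_le (hbdd p.1) z)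
    rw [hset]
    have hgm : Measurable g := hg.measurable
    have hMm : Measurable fun p : S × S => M p.1 := hM.measurable.comp measurable_fst
    exact measurableSet_le hgm hMm
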